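/- Let k be a circle with center O and radius R and ω a circle with center I and radius r in the Euclidean plane ℝ², with ω strictly inside k (dist(O,I) + r < R). Suppose that for some line t₀ tangent to ω and some t₀-pair (ω₁, ω₂), the three circles ω, ω₁, ω₂ have two distinct common external tangent lines. Then for every line t tangent to ω and every t-pair (ω₁, ω₂), the three circles ω, ω₁, ω₂ have two distinct common external tangent lines. -/

import Mathlib

open RealInnerProductSpace

noncomputable section

/-- The Euclidean plane. -/
abbrev Pt := EuclideanSpace ℝ (Fin 2)

/-- `L` is a line in the plane. -/
def IsLine (L : Set Pt) : Prop :=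
  ∃ P v : Pt, v ≠ 0 ∧ L = {X | ∃ t : ℝ, X = P + t • v}

/-- The line `L` is tangent to the circle with center `P` and radius `ρ`:
the distance from `P` to `L` equals `ρ`. -/
def TangentTo (L : Set Pt) (P : Pt) (ρ : ℝ) : Prop := Metric.infDist P L = ρ

/-- All points of `S` lie strictly on the same side of the line `L`: there is a unit
normal `u` of `L` and a point `X₀ ∈ L` such that all signed distances `⟪X - X₀, u⟫`
for `X ∈ S` are strictly positive (choosing `-u` covers the other sign). -/
def StrictSameSide (L : Set Pt) (S : Set Pt) : Prop :=
  ∃ u X₀ : Pt, ‖u‖ = 1 ∧ X₀ ∈ L ∧ (∀ X ∈ L, ∀ Y ∈ L, ⟪X - Y, u⟫ = 0) ∧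
    ∀ P ∈ S, 0 < ⟪P - X₀, u⟫

/-- `L` is a common external tangent of the three circles `c₁, c₂, c₃`
(each given as a pair (center, radius)). -/
def IsCommonExternalTangent (L : Set Pt) (c₁ c₂ c₃ : Pt × ℝ) : Prop :=
  IsLine L ∧ TangentTo L c₁.1 c₁.2 ∧ TangentTo L c₂.1 c₂.2 ∧ TangentTo L c₃.1 c₃.2 ∧
    StrictSameSide L {c₁.1, c₂.1, c₃.1}

/-- Given the outer circle `(O, R)`, the inner circle `(I, r)` and a line `t` tangent to the
inner circle, `(c₁, c₂)` is a `t`-pair: two distinct circles, each externally tangent to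
`(I, r)`, internally tangent to `(O, R)`, tangent to `t`, with center strictly on the same
side of `t` as `I`. -/
def TPair (O : Pt) (R : ℝ) (I : Pt) (r : ℝ) (t : Set Pt) (c₁ c₂ : Pt × ℝ) : Prop :=
  c₁ ≠ c₂ ∧ 0 < c₁.2 ∧ 0 < c₂.2 ∧
  dist c₁.1 I = c₁.2 + r ∧ dist c₁.1 O = R - c₁.2 ∧
  dist c₂.1 I = c₂.2 + r ∧ dist c₂.1 O = R - c₂.2 ∧
  TangentTo t c₁.1 c₁.2 ∧ TangentTo t c₂.1 c₂.2 ∧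
  StrictSameSide t {I, c₁.1, c₂.1}

/-! ### Auxiliary toolkit -/

/-- Rotation by 90 degrees. -/
def rot (u : Pt) : Pt := WithLp.toLp 2 ![-(u 1), u 0]

lemma inner2 (x y : Pt) : ⟪x, y⟫ = x 0 * y 0 + x 1 * y 1 := by
  simp [PiLp.inner_apply, Fin.sum_univ_two, RCLike.inner_apply, mul_comm]

lemma normsq (x : Pt) : ‖x‖^2 = x 0^2 + x 1^2 := by
  rw [← real_inner_self_eq_norm_sq]; rw [inner2]; ring

lemma pt_ext {x y : Pt} (h0 : x 0 = y 0) (h1 : x 1 = y 1) : x = y := by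
  ext i; fin_cases i; exacts [h0, h1]

lemma rot_zero (u : Pt) : rot u 0 = -(u 1) := rfl
lemma rot_one (u : Pt) : rot u 1 = u 0 := rfl

lemma norm_rot (u : Pt) : ‖rot u‖ = ‖u‖ := by
  have h1 := normsq (rot u)
  have h2 := normsq u
  rw [rot_zero, rot_one] at h1
  nlinarith [norm_nonneg (rot u), norm_nonneg u]

lemma inner_rot_self (u : Pt) : ⟪u, rot u⟫ = 0 := by
  rw [inner2, rot_zero, rot_one]; ring

/-- Expansion in the orthonormal basis (u, rot u). -/
lemma expand {u : Pt} (hu : ‖u‖ = 1) (z : Pt) :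
    z = ⟪z, u⟫ • u + ⟪z, rot u⟫ • rot u := by
  have h : u 0 ^ 2 + u 1 ^ 2 = 1 := by have := normsq u; rw [hu] at this; nlinarith
  refine pt_ext ?_ ?_ <;>
      simp only [PiLp.add_apply, PiLp.smul_apply, smul_eq_mul, inner2, rot_zero, rot_one]
  · linear_combination (-(z 0)) * h
  · linear_combination (-(z 1)) * h

lemma normsq_decomp {u : Pt} (hu : ‖u‖ = 1) (z : Pt) :
    ‖z‖^2 = ⟪z, u⟫^2 + ⟪z, rot u⟫^2 := by
  have h : u 0 ^ 2 + u 1 ^ 2 = 1 := by have := normsq u; rw [hu] at this; nlinarith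
  rw [normsq, inner2, inner2, rot_zero, rot_one]
  linear_combination (-(z 0^2) - z 1^2) * h

lemma dist_decomp {u : Pt} (hu : ‖u‖ = 1) (P Q : Pt) :
    (dist P Q)^2 = ⟪P - Q, u⟫^2 + ⟪P - Q, rot u⟫^2 := by
  rw [dist_eq_norm]; exact normsq_decomp hu _

lemma rot_ne_zero {u : Pt} (hu : ‖u‖ = 1) : rot u ≠ 0 := by
  intro h
  have : ‖rot u‖ = 0 := by rw [h]; simp
  rw [norm_rot, hu] at this; norm_num at this

/-- Every line has a normal form. -/
lemma line_normal_form {L : Set Pt} (hL : IsLine L) :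
    ∃ n : Pt, ∃ e : ℝ, ‖n‖ = 1 ∧ L = {X | ⟪X, n⟫ = e} := by
  obtain ⟨P, v, hv, rfl⟩ := hL
  have hvn : ‖v‖ ≠ 0 := by simpa using hv
  set n : Pt := ‖v‖⁻¹ • rot v with hn
  have hnorm : ‖n‖ = 1 := by
    rw [hn, norm_smul, norm_rot]; simp [abs_of_nonneg (norm_nonneg v)]
    field_simp
  refine ⟨n, ⟪P, n⟫, hnorm, ?_⟩
  ext X
  simp only [Set.mem_setOf_eq]
  constructor
  · rintro ⟨t, rfl⟩
    have hvrot : ⟪v, n⟫ = 0 := by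
      rw [hn, real_inner_smul_right, inner_rot_self, mul_zero]
    rw [inner_add_left, real_inner_smul_left, hvrot, mul_zero, add_zero]
  · intro hX
    have h0 : ⟪X - P, rot v⟫ = 0 := by
      have : ⟪X - P, n⟫ = 0 := by rw [inner_sub_left, hX]; ring
      rw [hn, real_inner_smul_right] at this
      rcases mul_eq_zero.1 this with h | h
      · exact absurd (inv_eq_zero.1 h) hvn
      · exact h
    rw [inner2, rot_zero, rot_one] at h0
    by_cases hv0 : v 0 = 0
    · have hv1 : v 1 ≠ 0 := by
        intro hv1; exact hv (pt_ext (by simpa using hv0) (by simpa using hv1))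
      refine ⟨(X 1 - P 1) / v 1, ?_⟩
      refine pt_ext ?_ ?_ <;>
        simp only [PiLp.add_apply, PiLp.smul_apply, smul_eq_mul, PiLp.sub_apply] at *
      · field_simp at h0 ⊢
        nlinarith [h0]
      · field_simp
        ring
    · refine ⟨(X 0 - P 0) / v 0, ?_⟩
      refine pt_ext ?_ ?_ <;>
        simp only [PiLp.add_apply, PiLp.smul_apply, smul_eq_mul, PiLp.sub_apply] at *
      · field_simp
        ring
      · field_simp at h0 ⊢
        nlinarith [h0]

/-- Converse: normal form gives a line. -/
lemma isLine_normal {n : Pt} (hn : ‖n‖ = 1) (e : ℝ) : IsLine {X | ⟪X, n⟫ = e} := by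
  refine ⟨e • n, rot n, rot_ne_zero hn, ?_⟩
  ext X
  simp only [Set.mem_setOf_eq]
  constructor
  · intro hX
    refine ⟨⟪X - e • n, rot n⟫, ?_⟩
    have := expand hn (X - e • n)
    have h1 : ⟪X - e • n, n⟫ = 0 := by
      rw [inner_sub_left, hX, real_inner_smul_left, real_inner_self_eq_norm_sq, hn]; ring
    rw [h1, zero_smul, zero_add] at this
    rw [← this]; abel
  · rintro ⟨t, rfl⟩
    rw [inner_add_left, real_inner_smul_left, real_inner_smul_left,
      real_inner_self_eq_norm_sq, hn, real_inner_comm, inner_rot_self]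
    ring

/-- Distance from a point to a line in normal form. -/
lemma infDist_line {n : Pt} (hn : ‖n‖ = 1) (e : ℝ) (P : Pt) :
    Metric.infDist P {X | ⟪X, n⟫ = e} = |⟪P, n⟫ - e| := by
  set L : Set Pt := {X | ⟪X, n⟫ = e}
  have hQ : P - (⟪P, n⟫ - e) • n ∈ L := by
    simp only [L, Set.mem_setOf_eq, inner_sub_left, real_inner_smul_left,
      real_inner_self_eq_norm_sq, hn]
    ring
  have hne : L.Nonempty := ⟨_, hQ⟩
  refine le_antisymm ?_ ?_
  · calc Metric.infDist P L ≤ dist P (P - (⟪P, n⟫ - e) • n) := Metric.infDist_le_dist_of_mem hQ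
      _ = |⟪P, n⟫ - e| := by
        rw [dist_eq_norm]
        simp [norm_smul, hn]
  · by_contra hlt
    push_neg at hlt
    obtain ⟨X, hX, hdX⟩ := (Metric.infDist_lt_iff hne).1 hlt
    have hX' : ⟪X, n⟫ = e := hX
    have hge : |⟪P, n⟫ - e| ≤ dist P X :=
      calc |⟪P, n⟫ - e| = |⟪P - X, n⟫| := by rw [inner_sub_left, hX']
        _ ≤ ‖P - X‖ * ‖n‖ := abs_real_inner_le_norm _ _
        _ = dist P X := by rw [hn, mul_one, dist_eq_norm]
    linarith

/-- StrictSameSide over a normal-form line: all signed distances have the same sign. -/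
lemma strictSameSide_normal {n : Pt} (hn : ‖n‖ = 1) (e : ℝ) {S : Set Pt}
    (h : StrictSameSide {X | ⟪X, n⟫ = e} S) :
    (∀ P ∈ S, 0 < ⟪P, n⟫ - e) ∨ (∀ P ∈ S, ⟪P, n⟫ - e < 0) := by
  obtain ⟨u, X₀, hu, hX₀, horth, hpos⟩ := h
  have hmem : ∀ t : ℝ, e • n + t • rot n ∈ {X : Pt | ⟪X, n⟫ = e} := by
    intro t
    simp only [Set.mem_setOf_eq, inner_add_left, real_inner_smul_left,
      real_inner_self_eq_norm_sq, hn, real_inner_comm n (rot n), inner_rot_self]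
    ring
  have hperp : ⟪u, rot n⟫ = 0 := by
    have := horth _ (hmem 1) _ (hmem 0)
    have h2 : (e • n + (1:ℝ) • rot n) - (e • n + (0:ℝ) • rot n) = rot n := by
      simp
    rw [h2] at this
    rw [real_inner_comm]; exact this
  have hexp := expand hn u
  rw [hperp, zero_smul, add_zero] at hexp
  set ε := ⟪u, n⟫ with hε
  have hε2 : ε^2 = 1 := by
    have := normsq_decomp hn u
    rw [hu, hperp] at this
    nlinarith
  have hX₀' : ⟪X₀, n⟫ = e := hX₀
  have key : ∀ P, ⟪P - X₀, u⟫ = ε * (⟪P, n⟫ - e) := by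
    intro P
    have h2 : ⟪P - X₀, u⟫ = ⟪P - X₀, ε • n⟫ := by rw [← hexp]
    rw [h2, real_inner_smul_right, inner_sub_left, hX₀']
  have hcase : ε = 1 ∨ ε = -1 := by
    rcases mul_self_eq_one_iff.1 (by nlinarith : ε * ε = 1) with h | h
    · exact Or.inl h
    · exact Or.inr h
  rcases hcase with h1 | h1
  · left
    intro P hP
    have := hpos P hP
    rw [key P, h1, one_mul] at this
    exact this
  · right
    intro P hP
    have := hpos P hP
    rw [key P, h1] at this
    linarith

/-- Normalized tangency data for a line tangent to three circles whose
centers lie strictly on the same side. -/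
lemma normalize_tangent {L : Set Pt} (hL : IsLine L) {I J₁ J₂ : Pt} {r r₁ r₂ : ℝ}
    (hr : 0 < r) (hr1 : 0 < r₁) (hr2 : 0 < r₂)
    (h1 : TangentTo L I r) (h2 : TangentTo L J₁ r₁) (h3 : TangentTo L J₂ r₂)
    (hside : StrictSameSide L {I, J₁, J₂}) :
    ∃ n : Pt, ∃ e : ℝ, ‖n‖ = 1 ∧ L = {X | ⟪X, n⟫ = e} ∧
      ⟪I, n⟫ - e = r ∧ ⟪J₁, n⟫ - e = r₁ ∧ ⟪J₂, n⟫ - e = r₂ := by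
  obtain ⟨n, e, hn, rfl⟩ := line_normal_form hL
  have hI : |⟪I, n⟫ - e| = r := by rw [← h1, infDist_line hn]
  have hJ1 : |⟪J₁, n⟫ - e| = r₁ := by rw [← h2, infDist_line hn]
  have hJ2 : |⟪J₂, n⟫ - e| = r₂ := by rw [← h3, infDist_line hn]
  have hImem : I ∈ ({I, J₁, J₂} : Set Pt) := by simp
  have hJ1mem : J₁ ∈ ({I, J₁, J₂} : Set Pt) := by simp
  have hJ2mem : J₂ ∈ ({I, J₁, J₂} : Set Pt) := by simp
  rcases strictSameSide_normal hn e hside with hpos | hneg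
  · exact ⟨n, e, hn, rfl, by rw [← hI, abs_of_pos (hpos I hImem)],
      by rw [← hJ1, abs_of_pos (hpos J₁ hJ1mem)],
      by rw [← hJ2, abs_of_pos (hpos J₂ hJ2mem)]⟩
  · refine ⟨-n, -e, by simpa using hn, ?_, ?_, ?_, ?_⟩
    · ext X
      simp only [Set.mem_setOf_eq, inner_neg_right]
      constructor <;> intro hh <;> linarith
    · rw [inner_neg_right, ← hI, abs_of_neg (hneg I hImem)]; ring
    · rw [inner_neg_right, ← hJ1, abs_of_neg (hneg J₁ hJ1mem)]; ring
    · rw [inner_neg_right, ← hJ2, abs_of_neg (hneg J₂ hJ2mem)]; ring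
/-! ### Algebra -/

lemma alg_prod {r r₁ r₂ ξ₁ ξ₂ a b : ℝ}
    (hE1 : ξ₁^2 = 4*r*r₁) (hE2 : ξ₂^2 = 4*r*r₂)
    (hne : ξ₁ ≠ ξ₂) (hab : a^2 + b^2 = 1) (hnot : ¬ (a = 0 ∧ b = 1))
    (h1 : a*ξ₁ = (1-b)*(r₁-r)) (h2 : a*ξ₂ = (1-b)*(r₂-r)) :
    ξ₁*ξ₂ = -4*r^2 := by
  have hb : (1:ℝ) - b ≠ 0 := by
    intro h
    have hb1 : b = 1 := by linarith
    have ha : a = 0 := by nlinarith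
    exact hnot ⟨ha, hb1⟩
  have Q1 : (1-b)*ξ₁^2 - 4*r*a*ξ₁ - 4*r^2*(1-b) = 0 := by
    linear_combination (1-b)*hE1 - 4*r*h1
  have Q2 : (1-b)*ξ₂^2 - 4*r*a*ξ₂ - 4*r^2*(1-b) = 0 := by
    linear_combination (1-b)*hE2 - 4*r*h2
  have hz : (1-b)*(ξ₁-ξ₂)*(ξ₁*ξ₂ + 4*r^2) = 0 := by
    linear_combination ξ₂*Q1 - ξ₁*Q2
  have hd : ξ₁ - ξ₂ ≠ 0 := sub_ne_zero.2 hne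
  rcases mul_eq_zero.1 hz with h | h
  · rcases mul_eq_zero.1 h with h' | h'
    · exact absurd h' hb
    · exact absurd h' hd
  · linarith

lemma alg_invariant {r r₁ r₂ ξ₁ ξ₂ p h R : ℝ} (hr : 0 < r)
    (hE1 : ξ₁^2 = 4*r*r₁) (hE2 : ξ₂^2 = 4*r*r₂)
    (hC1 : (ξ₁-p)^2 + (r₁-h)^2 = (R-r₁)^2)
    (hC2 : (ξ₂-p)^2 + (r₂-h)^2 = (R-r₂)^2)
    (hne : ξ₁ ≠ ξ₂)
    (hprod : ξ₁*ξ₂ = -4*r^2) :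
    p^2 + (h-r)^2 = R^2 - 2*r*R - 3*r^2 := by
  have S1 : (2*r+R-h)*ξ₁^2 - 4*p*r*ξ₁ - 2*r*(R^2-p^2-h^2) = 0 := by
    linear_combination 2*r*hC1 + (R-h)*hE1
  have S2 : (2*r+R-h)*ξ₂^2 - 4*p*r*ξ₂ - 2*r*(R^2-p^2-h^2) = 0 := by
    linear_combination 2*r*hC2 + (R-h)*hE2
  have hz : (ξ₁-ξ₂)*((2*r+R-h)*(ξ₁*ξ₂) + 2*r*(R^2-p^2-h^2)) = 0 := by
    linear_combination ξ₂*S1 - ξ₁*S2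
  have hd : ξ₁ - ξ₂ ≠ 0 := sub_ne_zero.2 hne
  have h2 : (2*r+R-h)*(ξ₁*ξ₂) + 2*r*(R^2-p^2-h^2) = 0 := by
    rcases mul_eq_zero.1 hz with h' | h'
    · exact absurd h' hd
    · exact h'
  rw [hprod] at h2
  nlinarith [h2]

lemma alg_prod_of_invariant {r r₁ r₂ ξ₁ ξ₂ p h R : ℝ}
    (hE1 : ξ₁^2 = 4*r*r₁) (hE2 : ξ₂^2 = 4*r*r₂)
    (hC1 : (ξ₁-p)^2 + (r₁-h)^2 = (R-r₁)^2)
    (hC2 : (ξ₂-p)^2 + (r₂-h)^2 = (R-r₂)^2)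
    (hA : 0 < 2*r + R - h) (hne : ξ₁ ≠ ξ₂)
    (hinv : p^2 + (h-r)^2 = R^2 - 2*r*R - 3*r^2) :
    ξ₁*ξ₂ = -4*r^2 := by
  have S1 : (2*r+R-h)*ξ₁^2 - 4*p*r*ξ₁ - 2*r*(R^2-p^2-h^2) = 0 := by
    linear_combination 2*r*hC1 + (R-h)*hE1
  have S2 : (2*r+R-h)*ξ₂^2 - 4*p*r*ξ₂ - 2*r*(R^2-p^2-h^2) = 0 := by
    linear_combination 2*r*hC2 + (R-h)*hE2
  have hz : (ξ₁-ξ₂)*((2*r+R-h)*(ξ₁*ξ₂) + 2*r*(R^2-p^2-h^2)) = 0 := by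
    linear_combination ξ₂*S1 - ξ₁*S2
  have hd : ξ₁ - ξ₂ ≠ 0 := sub_ne_zero.2 hne
  have h2 : (2*r+R-h)*(ξ₁*ξ₂) + 2*r*(R^2-p^2-h^2) = 0 := by
    rcases mul_eq_zero.1 hz with h' | h'
    · exact absurd h' hd
    · exact h'
  have hc : 2*r*(R^2-p^2-h^2) = 4*r^2*(2*r+R-h) := by linear_combination (-2*r)*hinv
  have h3 : (2*r+R-h)*(ξ₁*ξ₂ + 4*r^2) = 0 := by linear_combination h2 - hc
  rcases mul_eq_zero.1 h3 with h' | h'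
  · exact absurd h' (ne_of_gt hA)
  · linarith

lemma alg_construct {r r₁ r₂ ξ₁ ξ₂ : ℝ} (hr : 0 < r)
    (hE1 : ξ₁^2 = 4*r*r₁) (hE2 : ξ₂^2 = 4*r*r₂)
    (hprod : ξ₁*ξ₂ = -4*r^2) :
    ∃ a b : ℝ, a^2 + b^2 = 1 ∧ b ≠ 1 ∧
      a*ξ₁ = (1-b)*(r₁-r) ∧ a*ξ₂ = (1-b)*(r₂-r) := by
  set m : ℝ := (ξ₁+ξ₂)/(4*r) with hm
  have hm1 : m^2 + 1 ≠ 0 := by positivity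
  refine ⟨2*m/(m^2+1), (m^2-1)/(m^2+1), ?_, ?_, ?_, ?_⟩
  · field_simp; ring
  · intro hb
    rw [div_eq_one_iff_eq hm1] at hb
    linarith
  · have key : m*ξ₁ = r₁ - r := by
      rw [hm]
      have hr4 : (4*r) ≠ 0 := by positivity
      field_simp
      linear_combination hE1 + hprod
    have h1b : (1 : ℝ) - (m^2-1)/(m^2+1) = 2/(m^2+1) := by
      field_simp; ring
    rw [h1b, ← key]
    field_simp
  · have key : m*ξ₂ = r₂ - r := by
      rw [hm]
      have hr4 : (4*r) ≠ 0 := by positivity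
      field_simp
      linear_combination hE2 + hprod
    have h1b : (1 : ℝ) - (m^2-1)/(m^2+1) = 2/(m^2+1) := by
      field_simp; ring
    rw [h1b, ← key]
    field_simp

/-! ### Coordinatization of a tangent configuration -/

lemma le_of_sq_le_sq' {x d : ℝ} (h : x^2 ≤ d^2) (hd : 0 ≤ d) : x ≤ d := by nlinarith

set_option maxHeartbeats 1000000 in
lemma setup (O I : Pt) {R r : ℝ} (hr : 0 < r) (hinside : dist O I + r < R)
    {t : Set Pt} (hline : IsLine t) (htan : TangentTo t I r)
    {c₁ c₂ : Pt × ℝ} (hpair : TPair O R I r t c₁ c₂) :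
    ∃ u : Pt, ∃ c : ℝ, ‖u‖ = 1 ∧ t = {X | ⟪X, u⟫ = c} ∧
      ⟪I, u⟫ - c = r ∧ ⟪c₁.1, u⟫ - c = c₁.2 ∧ ⟪c₂.1, u⟫ - c = c₂.2 ∧
      (⟪c₁.1 - I, rot u⟫)^2 = 4*r*c₁.2 ∧
      (⟪c₂.1 - I, rot u⟫)^2 = 4*r*c₂.2 ∧
      (⟪c₁.1 - I, rot u⟫ - ⟪O - I, rot u⟫)^2 + (c₁.2 - (⟪O, u⟫ - c))^2 = (R - c₁.2)^2 ∧
      (⟪c₂.1 - I, rot u⟫ - ⟪O - I, rot u⟫)^2 + (c₂.2 - (⟪O, u⟫ - c))^2 = (R - c₂.2)^2 ∧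
      0 < 2*r + R - (⟪O, u⟫ - c) ∧
      ⟪c₁.1 - I, rot u⟫ ≠ ⟪c₂.1 - I, rot u⟫ ∧
      (⟪O - I, rot u⟫)^2 + ((⟪O, u⟫ - c) - r)^2 = (dist O I)^2 := by
  obtain ⟨hcne, hr1, hr2, hd1I, hd1O, hd2I, hd2O, ht1, ht2, hside⟩ := hpair
  obtain ⟨u, c, hu, rfl, hIu, hJ1u, hJ2u⟩ :=
    normalize_tangent hline hr hr1 hr2 htan ht1 ht2 hside
  set w := rot u with hw
  -- u-components of differences
  have hJ1Iu : ⟪c₁.1 - I, u⟫ = c₁.2 - r := by rw [inner_sub_left]; linarith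
  have hJ2Iu : ⟪c₂.1 - I, u⟫ = c₂.2 - r := by rw [inner_sub_left]; linarith
  have hJ1Ou : ⟪c₁.1 - O, u⟫ = c₁.2 - (⟪O, u⟫ - c) := by rw [inner_sub_left]; linarith
  have hJ2Ou : ⟪c₂.1 - O, u⟫ = c₂.2 - (⟪O, u⟫ - c) := by rw [inner_sub_left]; linarith
  have hOIu : ⟪O - I, u⟫ = (⟪O, u⟫ - c) - r := by rw [inner_sub_left]; linarith
  -- w-components of differences relative to O
  have hJ1Ow : ⟪c₁.1 - O, w⟫ = ⟪c₁.1 - I, w⟫ - ⟪O - I, w⟫ := by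
    rw [inner_sub_left, inner_sub_left, inner_sub_left]; ring
  have hJ2Ow : ⟪c₂.1 - O, w⟫ = ⟪c₂.1 - I, w⟫ - ⟪O - I, w⟫ := by
    rw [inner_sub_left, inner_sub_left, inner_sub_left]; ring
  -- squared distance identities
  have hsq1 := dist_decomp hu c₁.1 I
  rw [hd1I, hJ1Iu, ← hw] at hsq1
  have hsq2 := dist_decomp hu c₂.1 I
  rw [hd2I, hJ2Iu, ← hw] at hsq2
  have hsqO1 := dist_decomp hu c₁.1 O
  rw [hd1O, hJ1Ou, ← hw, hJ1Ow] at hsqO1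
  have hsqO2 := dist_decomp hu c₂.1 O
  rw [hd2O, hJ2Ou, ← hw, hJ2Ow] at hsqO2
  have hsqOI := dist_decomp hu O I
  rw [hOIu, ← hw] at hsqOI
  have hE1 : (⟪c₁.1 - I, w⟫)^2 = 4*r*c₁.2 := by linear_combination - hsq1
  have hE2 : (⟪c₂.1 - I, w⟫)^2 = 4*r*c₂.2 := by linear_combination - hsq2
  have hC1 : (⟪c₁.1 - I, w⟫ - ⟪O - I, w⟫)^2 + (c₁.2 - (⟪O, u⟫ - c))^2 = (R - c₁.2)^2 := by
    linear_combination - hsqO1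
  have hC2 : (⟪c₂.1 - I, w⟫ - ⟪O - I, w⟫)^2 + (c₂.2 - (⟪O, u⟫ - c))^2 = (R - c₂.2)^2 := by
    linear_combination - hsqO2
  have hdOI : (⟪O - I, w⟫)^2 + ((⟪O, u⟫ - c) - r)^2 = (dist O I)^2 := by
    linear_combination - hsqOI
  -- the leading coefficient is positive
  have hA : 0 < 2*r + R - (⟪O, u⟫ - c) := by
    have hd0 : 0 ≤ dist O I := dist_nonneg
    have hle : ((⟪O, u⟫ - c) - r)^2 ≤ (dist O I)^2 := by
      linarith [sq_nonneg (⟪O - I, w⟫ : ℝ), hdOI]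
    have hle2 : (⟪O, u⟫ - c) - r ≤ dist O I := le_of_sq_le_sq' hle hd0
    linarith
  -- the two circles have distinct abscissae
  have hxne : ⟪c₁.1 - I, w⟫ ≠ ⟪c₂.1 - I, w⟫ := by
    intro heq
    have hreq : c₁.2 = c₂.2 := by
      have h4 : 4*r*c₁.2 = 4*r*c₂.2 := by rw [← hE1, ← hE2, heq]
      have : (4*r) ≠ 0 := by positivity
      exact mul_left_cancel₀ this h4
    have hJeq : c₁.1 = c₂.1 := by
      have hdd := dist_decomp hu c₁.1 c₂.1
      have hau : ⟪c₁.1 - c₂.1, u⟫ = 0 := by rw [inner_sub_left]; linarith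
      have haw : ⟪c₁.1 - c₂.1, w⟫ = 0 := by
        rw [inner_sub_left]
        rw [inner_sub_left, inner_sub_left] at heq
        linarith
      rw [hau, ← hw, haw] at hdd
      have h00 : (dist c₁.1 c₂.1)^2 = 0 := by rw [hdd]; ring
      have : dist c₁.1 c₂.1 = 0 := by
        have := sq_eq_zero_iff.1 h00
        exact this
      exact dist_eq_zero.1 this
    exact hcne (Prod.ext hJeq hreq)
  exact ⟨u, c, hu, rfl, hIu, hJ1u, hJ2u, hE1, hE2, hC1, hC2, hA, hxne, hdOI⟩

lemma eq_one_of_sq {x : ℝ} (h : x^2 = 1) (h2 : 0 ≤ x) : x = 1 := by nlinarith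

/-- Data extracted from a common external tangent. -/
lemma ext_tangent_data (I : Pt) {r : ℝ} {c₁ c₂ : Pt × ℝ} (hr : 0 < r)
    (hr1 : 0 < c₁.2) (hr2 : 0 < c₂.2)
    {L : Set Pt} (hL : IsCommonExternalTangent L (I, r) c₁ c₂)
    {u : Pt} (hu : ‖u‖ = 1) {c : ℝ} (hIu : ⟪I, u⟫ - c = r)
    (hJ1u : ⟪c₁.1, u⟫ - c = c₁.2) (hJ2u : ⟪c₂.1, u⟫ - c = c₂.2) :
    ∃ a b : ℝ, a^2 + b^2 = 1 ∧
      a*⟪c₁.1 - I, rot u⟫ = (1-b)*(c₁.2-r) ∧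
      a*⟪c₂.1 - I, rot u⟫ = (1-b)*(c₂.2-r) ∧
      ((a = 0 ∧ b = 1) → L = {X | ⟪X, u⟫ = c}) := by
  obtain ⟨hline, htI, ht1, ht2, hside⟩ := hL
  obtain ⟨n, e, hn, rfl, hIn, hJ1n, hJ2n⟩ :=
    normalize_tangent hline hr hr1 hr2 htI ht1 ht2 hside
  refine ⟨⟪n, rot u⟫, ⟪n, u⟫, ?_, ?_, ?_, ?_⟩
  · have := normsq_decomp hu n
    rw [hn] at this
    nlinarith [this]
  · have hdiff : ⟪c₁.1 - I, n⟫ = c₁.2 - r := by rw [inner_sub_left]; linarith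
    have hexp : ⟪c₁.1 - I, n⟫ =
        ⟪n, u⟫*⟪c₁.1 - I, u⟫ + ⟪n, rot u⟫*⟪c₁.1 - I, rot u⟫ := by
      conv_lhs => rw [expand hu n]
      rw [inner_add_right, real_inner_smul_right, real_inner_smul_right]
    have hwu : ⟪c₁.1 - I, u⟫ = c₁.2 - r := by rw [inner_sub_left]; linarith
    rw [hdiff, hwu] at hexp
    linear_combination - hexp
  · have hdiff : ⟪c₂.1 - I, n⟫ = c₂.2 - r := by rw [inner_sub_left]; linarith
    have hexp : ⟪c₂.1 - I, n⟫ =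
        ⟪n, u⟫*⟪c₂.1 - I, u⟫ + ⟪n, rot u⟫*⟪c₂.1 - I, rot u⟫ := by
      conv_lhs => rw [expand hu n]
      rw [inner_add_right, real_inner_smul_right, real_inner_smul_right]
    have hwu : ⟪c₂.1 - I, u⟫ = c₂.2 - r := by rw [inner_sub_left]; linarith
    rw [hdiff, hwu] at hexp
    linear_combination - hexp
  · rintro ⟨ha, hb⟩
    have hnu : n = u := by
      have := expand hu n
      rw [ha, hb] at this
      simpa using this
    have hec : e = c := by
      rw [hnu] at hIn
      linarith
    rw [hnu, hec]

/-- From one configuration with two distinct common external tangents, the invariant. -/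
lemma invariant_of_two_tangents (O I : Pt) {R r : ℝ} (hr : 0 < r)
    (hinside : dist O I + r < R) {t : Set Pt} (hline : IsLine t)
    (htan : TangentTo t I r) {c₁ c₂ : Pt × ℝ} (hpair : TPair O R I r t c₁ c₂)
    {u₁ u₂ : Set Pt} (hu12 : u₁ ≠ u₂)
    (h1 : IsCommonExternalTangent u₁ (I, r) c₁ c₂)
    (h2 : IsCommonExternalTangent u₂ (I, r) c₁ c₂) :
    (dist O I)^2 = R^2 - 2*r*R - 3*r^2 := by
  have hr1 : 0 < c₁.2 := hpair.2.1
  have hr2 : 0 < c₂.2 := hpair.2.2.1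
  obtain ⟨u, c, hu, hteq, hIu, hJ1u, hJ2u, hE1, hE2, hC1, hC2, hA, hxne, hdOI⟩ :=
    setup O I hr hinside hline htan hpair
  obtain ⟨a₁, b₁, hab₁, hrel₁₁, hrel₁₂, hdeg₁⟩ :=
    ext_tangent_data I hr hr1 hr2 h1 hu hIu hJ1u hJ2u
  obtain ⟨a₂, b₂, hab₂, hrel₂₁, hrel₂₂, hdeg₂⟩ :=
    ext_tangent_data I hr hr1 hr2 h2 hu hIu hJ1u hJ2u
  have hprod : ⟪c₁.1 - I, rot u⟫ * ⟪c₂.1 - I, rot u⟫ = -4*r^2 := by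
    by_cases hcase : a₁ = 0 ∧ b₁ = 1
    · have hcase2 : ¬ (a₂ = 0 ∧ b₂ = 1) := by
        intro hcase2
        exact hu12 ((hdeg₁ hcase).trans (hdeg₂ hcase2).symm)
      exact alg_prod hE1 hE2 hxne hab₂ hcase2 hrel₂₁ hrel₂₂
    · exact alg_prod hE1 hE2 hxne hab₁ hcase hrel₁₁ hrel₁₂
  have hinv := alg_invariant hr hE1 hE2 hC1 hC2 hxne hprod
  rw [← hdOI]
  exact hinv

/-- From the invariant, every tangent configuration has the two tangents. -/
lemma closure_of_invariant (O I : Pt) {R r : ℝ} (hr : 0 < r)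
    (hinside : dist O I + r < R)
    (hinv : (dist O I)^2 = R^2 - 2*r*R - 3*r^2)
    {t : Set Pt} (hline : IsLine t) (htan : TangentTo t I r)
    {c₁ c₂ : Pt × ℝ} (hpair : TPair O R I r t c₁ c₂) :
    ∃ u₁ u₂ : Set Pt, u₁ ≠ u₂ ∧
      IsCommonExternalTangent u₁ (I, r) c₁ c₂ ∧
      IsCommonExternalTangent u₂ (I, r) c₁ c₂ := by
  have hr1 : 0 < c₁.2 := hpair.2.1
  have hr2 : 0 < c₂.2 := hpair.2.2.1
  obtain ⟨u, c, hu, hteq, hIu, hJ1u, hJ2u, hE1, hE2, hC1, hC2, hA, hxne, hdOI⟩ :=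
    setup O I hr hinside hline htan hpair
  have hinv' : (⟪O - I, rot u⟫)^2 + ((⟪O, u⟫ - c) - r)^2 = R^2 - 2*r*R - 3*r^2 :=
    hdOI.trans hinv
  have hprod := alg_prod_of_invariant hE1 hE2 hC1 hC2 hA hxne hinv'
  obtain ⟨a, b, hab, hb1, hrel1, hrel2⟩ := alg_construct hr hE1 hE2 hprod
  -- the second tangent line
  set w := rot u with hw
  set n : Pt := b • u + a • w with hn
  have hwu : ⟪w, u⟫ = 0 := by rw [real_inner_comm]; exact inner_rot_self u
  have hnu : ⟪n, u⟫ = b := by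
    rw [hn, inner_add_left, real_inner_smul_left, real_inner_smul_left,
      real_inner_self_eq_norm_sq, hu, hwu]
    ring
  have hnw : ⟪n, w⟫ = a := by
    rw [hn, inner_add_left, real_inner_smul_left, real_inner_smul_left, hw,
      inner_rot_self]
    have : ⟪rot u, rot u⟫ = 1 := by
      rw [real_inner_self_eq_norm_sq, norm_rot, hu]; norm_num
    rw [this]; ring
  have hnn : ‖n‖ = 1 := by
    have hdec := normsq_decomp hu n
    rw [hnu, ← hw, hnw] at hdec
    refine eq_one_of_sq ?_ (norm_nonneg n)
    rw [hdec]; linarith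
  set e : ℝ := ⟪I, n⟫ - r with he
  -- signed distances of the three centers from the new line
  have hInd : ⟪I, n⟫ - e = r := by rw [he]; ring
  have hJ1nd : ⟪c₁.1, n⟫ - e = c₁.2 := by
    have hdiffu : ⟪c₁.1 - I, u⟫ = c₁.2 - r := by rw [inner_sub_left]; linarith
    have hdiff : ⟪c₁.1 - I, n⟫ = c₁.2 - r := by
      rw [hn, inner_add_right, real_inner_smul_right, real_inner_smul_right, hdiffu]
      linear_combination hrel1
    rw [inner_sub_left] at hdiff
    rw [he]; linarith
  have hJ2nd : ⟪c₂.1, n⟫ - e = c₂.2 := by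
    have hdiffu : ⟪c₂.1 - I, u⟫ = c₂.2 - r := by rw [inner_sub_left]; linarith
    have hdiff : ⟪c₂.1 - I, n⟫ = c₂.2 - r := by
      rw [hn, inner_add_right, real_inner_smul_right, real_inner_smul_right, hdiffu]
      linear_combination hrel2
    rw [inner_sub_left] at hdiff
    rw [he]; linarith
  set L₂ : Set Pt := {X | ⟪X, n⟫ = e} with hL₂
  have hcet : IsCommonExternalTangent t (I, r) c₁ c₂ :=
    ⟨hline, htan, hpair.2.2.2.2.2.2.2.1, hpair.2.2.2.2.2.2.2.2.1, hpair.2.2.2.2.2.2.2.2.2⟩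
  have hcet2 : IsCommonExternalTangent L₂ (I, r) c₁ c₂ := by
    refine ⟨isLine_normal hnn e, ?_, ?_, ?_, ?_⟩
    · show Metric.infDist I L₂ = r
      rw [hL₂, infDist_line hnn, hInd, abs_of_pos hr]
    · show Metric.infDist c₁.1 L₂ = c₁.2
      rw [hL₂, infDist_line hnn, hJ1nd, abs_of_pos hr1]
    · show Metric.infDist c₂.1 L₂ = c₂.2
      rw [hL₂, infDist_line hnn, hJ2nd, abs_of_pos hr2]
    · refine ⟨n, e • n, hnn, ?_, ?_, ?_⟩
      · show ⟪e • n, n⟫ = e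
        rw [real_inner_smul_left, real_inner_self_eq_norm_sq, hnn]; ring
      · intro X hX Y hY
        have hX' : ⟪X, n⟫ = e := hX
        have hY' : ⟪Y, n⟫ = e := hY
        rw [inner_sub_left, hX', hY', sub_self]
      · intro P hP
        have hen : ⟪e • n, n⟫ = e := by
          rw [real_inner_smul_left, real_inner_self_eq_norm_sq, hnn]; ring
        rcases hP with hP | hP | hP
        · subst hP
          rw [inner_sub_left, hen]
          linarith [hInd]
        · subst hP
          rw [inner_sub_left, hen]
          linarith [hJ1nd]
        · rw [Set.mem_singleton_iff] at hP
          subst hP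
          rw [inner_sub_left, hen]
          linarith [hJ2nd]
  -- the two lines are distinct
  have htL : t ≠ L₂ := by
    intro heq
    have hF : (I - r • u) ∈ t := by
      rw [hteq]
      show ⟪I - r • u, u⟫ = c
      rw [inner_sub_left, real_inner_smul_left, real_inner_self_eq_norm_sq, hu]
      linarith [hIu]
    rw [heq] at hF
    have hF' : ⟪I - r • u, n⟫ = e := hF
    rw [inner_sub_left, real_inner_smul_left] at hF'
    have hun : ⟪u, n⟫ = b := by rw [real_inner_comm]; exact hnu
    rw [hun] at hF'
    have : r * (1 - b) = 0 := by linarith [hInd]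
    rcases mul_eq_zero.1 this with h' | h'
    · exact absurd h' (ne_of_gt hr)
    · exact hb1 (by linarith)
  exact ⟨t, L₂, htL, hcet, hcet2⟩

/-- **Theorem 1 (Sangaku closure).** If for some tangent line `t₀` of `ω` and some
`t₀`-pair the three circles `ω, ω₁, ω₂` have two distinct common external tangents, then
the same holds for every tangent line `t` of `ω` and every `t`-pair. -/
theorem sangaku_two_tangents_invariant
    (O I : Pt) (R r : ℝ) (hr : 0 < r) (hR : 0 < R)
    (hinside : dist O I + r < R)
    (h : ∃ t₀ : Set Pt, IsLine t₀ ∧ TangentTo t₀ I r ∧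
      ∃ c₁ c₂ : Pt × ℝ, TPair O R I r t₀ c₁ c₂ ∧
        ∃ u₁ u₂ : Set Pt, u₁ ≠ u₂ ∧
          IsCommonExternalTangent u₁ (I, r) c₁ c₂ ∧
          IsCommonExternalTangent u₂ (I, r) c₁ c₂) :
    ∀ t : Set Pt, IsLine t → TangentTo t I r →
      ∀ c₁ c₂ : Pt × ℝ, TPair O R I r t c₁ c₂ →
        ∃ u₁ u₂ : Set Pt, u₁ ≠ u₂ ∧
          IsCommonExternalTangent u₁ (I, r) c₁ c₂ ∧
          IsCommonExternalTangent u₂ (I, r) c₁ c₂ := by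
  obtain ⟨t₀, hline₀, htan₀, c₁₀, c₂₀, hpair₀, u₁, u₂, hu12, h1, h2⟩ := h
  have hinv := invariant_of_two_tangents O I hr hinside hline₀ htan₀ hpair₀ hu12 h1 h2
  intro t hline htan c₁ c₂ hpair
  exact closure_of_invariant O I hr hinside hinv hline htan hpair
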